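/- arXiv:1202.1347 — 3 statements merged into one kernel-verified Lean document; each statement's English description precedes it below -/
import Mathlib

section
/- Let K be a compact operator on a Hilbert space H such that I + K is invertible, and let P_n be the orthogonal projection onto the first n basis vectors of an orthonormal basis. Then there exist constants C > 0 and n_0 such that for all n ≥ n_0, the finite section A_n = P_n(I+K)P_n (viewed as an operator on the range of P_n) is invertible and ‖A_n‖ ≤ C and ‖A_n^{-1}‖ ≤ C. -/
open Filter

variable {H : Type*} [NormedAddCommGroup H] [InnerProductSpace ℂ H] [CompleteSpace H]

/-- The span of the first `n` vectors of an orthonormal basis. -/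
noncomputable def firstNSpan (e : HilbertBasis ℕ ℂ H) (n : ℕ) : Submodule ℂ H :=
  Submodule.span ℂ ((fun i => e i) '' Set.Iio n)

instance (e : HilbertBasis ℕ ℂ H) (n : ℕ) : FiniteDimensional ℂ (firstNSpan e n) :=
  FiniteDimensional.span_of_finite ℂ ((Set.finite_Iio n).image _)

/-- The finite section `A_n = P_n (I + K) P_n`, viewed as an operator on the range of
`P_n`, i.e. on the span of the first `n` basis vectors. -/
noncomputable def finiteSection (e : HilbertBasis ℕ ℂ H) (K : H →L[ℂ] H) (n : ℕ) :
    firstNSpan e n →L[ℂ] firstNSpan e n :=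
  ((firstNSpan e n).orthogonalProjectionOnto).comp ((1 + K).comp (firstNSpan e n).subtypeL)

lemma firstNSpan_le_dist (e : HilbertBasis ℕ ℂ H) (n : ℕ) (x : H) {y : H}
    (hy : y ∈ firstNSpan e n) :
    ‖x - ((firstNSpan e n).orthogonalProjectionOnto x : H)‖ ≤ ‖x - y‖ := by
  rw [← Submodule.starProjection_apply, Submodule.starProjection_minimal]
  exact ciInf_le ⟨0, fun b => by rintro ⟨v, rfl⟩; positivity⟩ (⟨y, hy⟩ : firstNSpan e n)

lemma firstNSpan_proj_tendsto (e : HilbertBasis ℕ ℂ H) (x : H) :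
    Tendsto (fun n => ‖x - ((firstNSpan e n).orthogonalProjectionOnto x : H)‖) atTop (nhds 0) := by
  have hs := (e.hasSum_repr x).tendsto_sum_nat
  have hs' : Tendsto (fun n => ‖x - ∑ i ∈ Finset.range n, e.repr x i • e i‖) atTop (nhds 0) := by
    rw [← tendsto_sub_nhds_zero_iff] at hs
    simpa [norm_sub_rev] using hs.norm
  refine squeeze_zero (fun n => norm_nonneg _) (fun n => firstNSpan_le_dist e n x ?_) hs'
  exact Submodule.sum_mem _ fun i hi => Submodule.smul_mem _ _
    (Submodule.subset_span ⟨i, Finset.mem_range.mp hi, rfl⟩)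

lemma key (e : HilbertBasis ℕ ℂ H) (K : H →L[ℂ] H) (hK : IsCompactOperator K)
    {ε : ℝ} (hε : 0 < ε) :
    ∃ n₀ : ℕ, ∀ n ≥ n₀, ∀ x : H,
      ‖K x - ((firstNSpan e n).orthogonalProjectionOnto (K x) : H)‖ ≤ ε * ‖x‖ := by
  obtain ⟨M, hM, hMsub⟩ :=
    IsCompactOperator.image_closedBall_subset_compact (𝕜₁ := ℂ) (f := (K : H →ₗ[ℂ] H)) hK 1
  obtain ⟨t, htfin, htsub⟩ := (Metric.totallyBounded_iff.mp hM.totallyBounded) (ε/2) (by linarith)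
  -- choose n₀ such that all centers are well approximated
  have hev : ∀ᶠ n in atTop, ∀ y ∈ t, ‖y - ((firstNSpan e n).orthogonalProjectionOnto y : H)‖ ≤ ε/2 := by
    rw [Filter.eventually_all_finite htfin]
    intro y _
    have := (firstNSpan_proj_tendsto e y).eventually (eventually_le_nhds (by linarith : (0:ℝ) < ε/2))
    simpa using this
  obtain ⟨n₀, hn₀⟩ := eventually_atTop.mp hev
  refine ⟨n₀, fun n hn x => ?_⟩
  -- first: unit-ball case
  have hunit : ∀ u : H, ‖u‖ ≤ 1 →
      ‖K u - ((firstNSpan e n).orthogonalProjectionOnto (K u) : H)‖ ≤ ε := by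
    intro u hu
    have hKu : K u ∈ M := hMsub ⟨u, by simpa [Metric.mem_closedBall] using hu, rfl⟩
    obtain ⟨y, hyt, hy⟩ := Set.mem_iUnion₂.mp (htsub hKu)
    have hy' : ‖K u - y‖ < ε/2 := by
      rw [Metric.mem_ball, dist_eq_norm] at hy; exact hy
    have h1 : ‖K u - ((firstNSpan e n).orthogonalProjectionOnto (K u) : H)‖
        ≤ ‖K u - ((firstNSpan e n).orthogonalProjectionOnto y : H)‖ :=
      firstNSpan_le_dist e n (K u) ((firstNSpan e n).orthogonalProjectionOnto y).2
    calc ‖K u - ((firstNSpan e n).orthogonalProjectionOnto (K u) : H)‖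
        ≤ ‖K u - ((firstNSpan e n).orthogonalProjectionOnto y : H)‖ := h1
      _ ≤ ‖K u - y‖ + ‖y - ((firstNSpan e n).orthogonalProjectionOnto y : H)‖ := by
          simpa using norm_sub_le_norm_sub_add_norm_sub (K u) y _
      _ ≤ ε/2 + ε/2 := add_le_add hy'.le (hn₀ n hn y hyt)
      _ = ε := by ring
  rcases eq_or_ne x 0 with rfl | hx
  · simp
  · have hxn : (0:ℝ) < ‖x‖ := norm_pos_iff.mpr hx
    set c : ℂ := (‖x‖ : ℂ) with hc
    have hc0 : c ≠ 0 := by simp [hc, hxn.ne']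
    set u : H := c⁻¹ • x with hudef
    have hxu : x = c • u := by rw [hudef, smul_inv_smul₀ hc0]
    have hun : ‖u‖ = 1 := by
      rw [hudef, norm_smul]
      simp [hc, norm_inv, hxn.ne']
    have := hunit u hun.le
    calc ‖K x - ((firstNSpan e n).orthogonalProjectionOnto (K x) : H)‖
        = ‖c • (K u - ((firstNSpan e n).orthogonalProjectionOnto (K u) : H))‖ := by
          simp only [hxu, map_smul, Submodule.coe_smul, smul_sub]
      _ = ‖x‖ * ‖K u - ((firstNSpan e n).orthogonalProjectionOnto (K u) : H)‖ := by
          rw [norm_smul]; simp [hc]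
      _ ≤ ‖x‖ * ε := by
          exact mul_le_mul_of_nonneg_left this hxn.le
      _ = ε * ‖x‖ := by ring

/-- Let `K` be a compact operator on a Hilbert space `H` with `I + K` invertible, and
let `P n` be the orthogonal projection onto the span of the first `n` vectors of an
orthonormal basis.  Then there exist `C > 0` and `n₀` such that for all `n ≥ n₀` the
finite section `A_n = P_n (I + K) P_n` (as an operator on the range of `P_n`) is
invertible with `‖A_n‖ ≤ C` and `‖A_n⁻¹‖ ≤ C`. -/
theorem finite_sections_uniformly_invertible
    (e : HilbertBasis ℕ ℂ H) (K : H →L[ℂ] H) (hK : IsCompactOperator K)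
    (hinv : ∃ J : H →L[ℂ] H, J.comp (1 + K) = 1 ∧ (1 + K).comp J = 1) :
    ∃ C > 0, ∃ n₀ : ℕ, ∀ n ≥ n₀,
      ∃ B : firstNSpan e n →L[ℂ] firstNSpan e n,
        (finiteSection e K n).comp B = 1 ∧
        B.comp (finiteSection e K n) = 1 ∧
        ‖finiteSection e K n‖ ≤ C ∧ ‖B‖ ≤ C := by
  obtain ⟨J, hJ1, hJ2⟩ := hinv
  set D : ℝ := 2 * (‖J‖ + 1) with hD
  have hDpos : 0 < D := by positivity
  have hε : (0:ℝ) < D⁻¹ := by positivity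
  obtain ⟨n₀, hn₀⟩ := key e K hK hε
  refine ⟨max ‖1 + K‖ D + 1, by positivity, n₀, fun n hn => ?_⟩
  set A := finiteSection e K n with hA
  -- lower bound
  have hbound : ∀ v : firstNSpan e n, ‖v‖ ≤ D * ‖A v‖ := by
    intro v
    set x : H := (v : H) with hx
    have hKx := hn₀ n hn x
    have hAv : (A v : H) = ((firstNSpan e n).orthogonalProjectionOnto ((1 + K) x) : H) := rfl
    have hPx : ((firstNSpan e n).orthogonalProjectionOnto x : H) = x :=
      by rw [← Submodule.starProjection_apply]; exact Submodule.starProjection_eq_self_iff.mpr v.2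
    have hsplit : (1 + K) x = (A v : H) + (K x - ((firstNSpan e n).orthogonalProjectionOnto (K x) : H)) := by
      rw [hAv]
      have : (1 + K) x = x + K x := by simp
      rw [this, map_add, Submodule.coe_add, hPx]
      abel
    have hxJ : x = J ((1 + K) x) := by
      have := congrArg (fun T : H →L[ℂ] H => T x) hJ1
      simp only [ContinuousLinearMap.comp_apply, ContinuousLinearMap.one_apply] at this
      exact this.symm
    have h1 : ‖x‖ ≤ ‖J‖ * ‖(1 + K) x‖ := by
      nth_rewrite 1 [hxJ]
      exact J.le_opNorm _
    have h2 : ‖(1 + K) x‖ ≤ ‖A v‖ + D⁻¹ * ‖x‖ := by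
      calc ‖(1 + K) x‖ ≤ ‖(A v : H)‖ + ‖K x - ((firstNSpan e n).orthogonalProjectionOnto (K x) : H)‖ := by
            rw [hsplit]; exact norm_add_le _ _
        _ ≤ ‖A v‖ + D⁻¹ * ‖x‖ := by
            rw [Submodule.norm_coe]; exact add_le_add le_rfl hKx
    have hnv : ‖v‖ = ‖x‖ := rfl
    have hJD : ‖J‖ * D⁻¹ ≤ 1/2 := by
      rw [hD]
      rw [mul_inv_le_iff₀ (by positivity)]
      nlinarith [norm_nonneg J]
    have : ‖x‖ ≤ ‖J‖ * ‖A v‖ + (1/2) * ‖x‖ := by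
      calc ‖x‖ ≤ ‖J‖ * (‖A v‖ + D⁻¹ * ‖x‖) := h1.trans (by
            exact mul_le_mul_of_nonneg_left h2 (norm_nonneg J))
        _ = ‖J‖ * ‖A v‖ + (‖J‖ * D⁻¹) * ‖x‖ := by ring
        _ ≤ ‖J‖ * ‖A v‖ + (1/2) * ‖x‖ := by
            exact add_le_add le_rfl (mul_le_mul_of_nonneg_right hJD (norm_nonneg x))
    rw [hnv]
    nlinarith [norm_nonneg (A v), norm_nonneg J, norm_nonneg x]
  -- injectivity
  have hinj : Function.Injective A := by
    intro v w h
    have : ‖v - w‖ ≤ D * ‖A (v - w)‖ := hbound _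
    rw [map_sub, h, sub_self, norm_zero, mul_zero] at this
    have := le_antisymm this (norm_nonneg _)
    rwa [norm_sub_eq_zero_iff] at this
  have hinjL : Function.Injective (A : firstNSpan e n →ₗ[ℂ] firstNSpan e n) := hinj
  have hbij : Function.Bijective (A : firstNSpan e n →ₗ[ℂ] firstNSpan e n) :=
    ⟨hinjL, (LinearMap.injective_iff_surjective).mp hinjL⟩
  let Aeq := LinearEquiv.ofBijective (A : firstNSpan e n →ₗ[ℂ] firstNSpan e n) hbij
  let B : firstNSpan e n →L[ℂ] firstNSpan e n :=
    LinearMap.toContinuousLinearMap (Aeq.symm : firstNSpan e n →ₗ[ℂ] firstNSpan e n)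
  have hAB : ∀ v, A (B v) = v := fun v => Aeq.apply_symm_apply v
  have hBA : ∀ v, B (A v) = v := fun v => Aeq.symm_apply_apply v
  refine ⟨B, ContinuousLinearMap.ext hAB, ContinuousLinearMap.ext hBA, ?_, ?_⟩
  · have : ‖A‖ ≤ ‖1 + K‖ := by
      refine A.opNorm_le_bound (norm_nonneg _) fun v => ?_
      have h1 : ‖A v‖ ≤ ‖(1 + K) (v : H)‖ := by
        rw [show (‖A v‖ : ℝ) = ‖(A v : H)‖ from (Submodule.norm_coe _).symm]
        calc ‖((firstNSpan e n).orthogonalProjectionOnto ((1 + K) (v:H)) : H)‖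
            ≤ ‖(firstNSpan e n).orthogonalProjectionOnto‖ * ‖(1 + K) (v:H)‖ :=
              ((firstNSpan e n).orthogonalProjectionOnto).le_opNorm _
          _ ≤ 1 * ‖(1 + K) (v:H)‖ :=
              mul_le_mul_of_nonneg_right (Submodule.orthogonalProjectionOnto_norm_le _) (norm_nonneg _)
          _ = ‖(1 + K) (v:H)‖ := one_mul _
      calc ‖A v‖ ≤ ‖(1 + K) (v : H)‖ := h1
        _ ≤ ‖1 + K‖ * ‖(v : H)‖ := (1 + K).le_opNorm _
        _ = ‖1 + K‖ * ‖v‖ := rfl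
    calc ‖A‖ ≤ ‖1 + K‖ := this
      _ ≤ max ‖1 + K‖ D + 1 := by
        have := le_max_left ‖1 + K‖ D; linarith
  · have : ‖B‖ ≤ D := by
      refine B.opNorm_le_bound hDpos.le fun v => ?_
      calc ‖B v‖ ≤ D * ‖A (B v)‖ := hbound _
        _ = D * ‖v‖ := by rw [hAB]
    calc ‖B‖ ≤ D := this
      _ ≤ max ‖1 + K‖ D + 1 := by
        have := le_max_right ‖1 + K‖ D; linarith
end

section
/- Finite-section convergence: let H be a Hilbert space, K compact on H with I + K invertible, P_n orthogonal projections onto an increasing exhausting family of finite-dimensional subspaces, and b ∈ H. Define, for n large enough, u_n ∈ P_n H by (P_n (I+K) P_n) u_n = P_n (I+K) u where u = (I+K)^{-1}(I+K)u is the exact solution. Then ‖u − u_n‖ ≤ C ‖u − P_n u‖ for some constant C independent of n; in particular u_n → u. -/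
open Filter

/-- Finite-section convergence: let `H` be a Hilbert space, `K` compact with `I + K`
invertible, `P n` orthogonal projections onto an increasing, exhausting family of
finite-dimensional subspaces, and let `u` solve `(I + K) u = f`.  If `u_n` in the range
of `P n` satisfies the Galerkin equation `P n (I + K) u_n = P n (I + K) u` and the finite
sections are uniformly invertible for `n ≥ n₀`, then
`‖u - u_n‖ ≤ C ‖u - P n u‖` for a constant `C` independent of `n`; in particular
`u_n → u`. -/
theorem finite_section_convergence
    {H : Type*} [NormedAddCommGroup H] [InnerProductSpace ℂ H] [CompleteSpace H]
    (P : ℕ → H →L[ℂ] H)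
    (hsa : ∀ n, IsSelfAdjoint (P n))
    (hidem : ∀ n, (P n).comp (P n) = P n)
    (hfd : ∀ n, FiniteDimensional ℂ (LinearMap.range (P n : H →ₗ[ℂ] H)))
    (hmono : Monotone fun n => LinearMap.range (P n : H →ₗ[ℂ] H))
    (hstrong : ∀ x : H, Tendsto (fun n => P n x) atTop (nhds x))
    (K : H →L[ℂ] H) (hK : IsCompactOperator K)
    (hinv : ∃ J : H →L[ℂ] H, J.comp (1 + K) = 1 ∧ (1 + K).comp J = 1)
    (f u : H) (hu : (1 + K) u = f)
    (n₀ : ℕ) (C₀ : ℝ) (hC₀ : 0 < C₀)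
    (hsec : ∀ n ≥ n₀, ∀ v ∈ LinearMap.range (P n : H →ₗ[ℂ] H), ‖v‖ ≤ C₀ * ‖P n ((1 + K) v)‖)
    (uN : ℕ → H)
    (huN : ∀ n, uN n ∈ LinearMap.range (P n : H →ₗ[ℂ] H))
    (hGalerkin : ∀ n, P n ((1 + K) (uN n)) = P n ((1 + K) u)) :
    (∃ C : ℝ, ∀ n ≥ n₀, ‖u - uN n‖ ≤ C * ‖u - P n u‖) ∧
      Tendsto uN atTop (nhds u) := by
  -- P n is a contraction
  have hPnorm : ∀ n (x : H), ‖P n x‖ ≤ ‖x‖ := by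
    intro n x
    have hsym := (hsa n).isSymmetric
    have h1 : (inner ℂ (P n x) (P n x) : ℂ) = inner ℂ x (P n x) := by
      have := hsym (P n x) x
      calc (inner ℂ (P n x) (P n x) : ℂ) = inner ℂ x (P n (P n x)) := hsym x (P n x)
        _ = inner ℂ x (P n x) := by
            congr 1
            have := congrArg (fun T : H →L[ℂ] H => T x) (hidem n)
            simpa using this
    have h2 : ‖P n x‖ ^ 2 ≤ ‖x‖ * ‖P n x‖ := by
      calc ‖P n x‖ ^ 2 = Complex.re (inner ℂ (P n x) (P n x) : ℂ) :=
            (inner_self_eq_norm_sq (𝕜 := ℂ) (P n x)).symm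
        _ = Complex.re (inner ℂ x (P n x) : ℂ) := by rw [h1]
        _ ≤ ‖(inner ℂ x (P n x) : ℂ)‖ := Complex.re_le_norm _
        _ ≤ ‖x‖ * ‖P n x‖ := norm_inner_le_norm _ _
    rcases eq_or_lt_of_le (norm_nonneg (P n x)) with h | h
    · rw [← h]; exact norm_nonneg x
    · nlinarith
  set A : H →L[ℂ] H := 1 + K with hA
  have key : ∀ n ≥ n₀, ‖u - uN n‖ ≤ (1 + C₀ * ‖A‖) * ‖u - P n u‖ := by
    intro n hn
    have hv : P n u - uN n ∈ LinearMap.range (P n : H →ₗ[ℂ] H) := by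
      apply Submodule.sub_mem
      · exact ⟨u, rfl⟩
      · exact huN n
    have hG : P n (A (P n u - uN n)) = P n (A (P n u - u)) := by
      rw [map_sub A, map_sub A, map_sub, map_sub, hGalerkin n]
    have h1 : ‖P n u - uN n‖ ≤ C₀ * ‖P n (A (P n u - uN n))‖ := hsec n hn _ hv
    have h2 : ‖P n (A (P n u - uN n))‖ ≤ ‖A‖ * ‖u - P n u‖ := by
      rw [hG]
      calc ‖P n (A (P n u - u))‖ ≤ ‖A (P n u - u)‖ := hPnorm n _
        _ ≤ ‖A‖ * ‖P n u - u‖ := A.le_opNorm _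
        _ = ‖A‖ * ‖u - P n u‖ := by rw [norm_sub_rev]
    calc ‖u - uN n‖ = ‖(u - P n u) + (P n u - uN n)‖ := by rw [sub_add_sub_cancel]
      _ ≤ ‖u - P n u‖ + ‖P n u - uN n‖ := norm_add_le _ _
      _ ≤ ‖u - P n u‖ + C₀ * (‖A‖ * ‖u - P n u‖) := by
          have := h1.trans (by nlinarith [h2, hC₀.le] : C₀ * ‖P n (A (P n u - uN n))‖ ≤ C₀ * (‖A‖ * ‖u - P n u‖))
          linarith
      _ = (1 + C₀ * ‖A‖) * ‖u - P n u‖ := by ring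
  refine ⟨⟨1 + C₀ * ‖A‖, key⟩, ?_⟩
  rw [tendsto_iff_norm_sub_tendsto_zero]
  have hg : Tendsto (fun n => (1 + C₀ * ‖A‖) * ‖u - P n u‖) atTop (nhds 0) := by
    have : Tendsto (fun n => ‖u - P n u‖) atTop (nhds 0) := by
      have := (hstrong u).const_sub u
      simpa using (tendsto_iff_norm_sub_tendsto_zero.mp (hstrong u)).congr (fun n => by rw [norm_sub_rev])
    simpa using this.const_mul (1 + C₀ * ‖A‖)
  apply squeeze_zero' (Eventually.of_forall fun n => norm_nonneg _) ?_ hg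
  filter_upwards [eventually_ge_atTop n₀] with n hn
  rw [norm_sub_rev]
  exact key n hn
end

section
/- Suppose u(x) = ∑_{k=0}^{n} u_k T_k(x) is a finite Chebyshev series and D_0, S_0 are the differentiation and conversion operators on coefficient sequences: (D_0 u)_k = (k+1) u_{k+1} and (S_0 u)_k = u_k/2 − u_{k+2}/2 for k ≥ 1 with (S_0 u)_0 = u_0 − u_2/2. Then the polynomial identity u'(x) + a(x)u(x), for a(x) = ∑ a_j T_j, has Chebyshev-U coefficient sequence D_0 u + S_0 M_0[a] u, where M_0[a] is the Chebyshev-T multiplication matrix. -/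
open Polynomial Polynomial.Chebyshev Finset

private lemma two_mul_T_aux (n : ℤ) : 2 * T ℝ n = U ℝ n - U ℝ (n - 2) := by
  have h1 := T_eq_U_sub_X_mul_U ℝ n
  have h2 := U_sub_two ℝ n
  linear_combination 2 * h1 + h2

private lemma deriv_aux (u : ℕ → ℝ) (m : ℕ) :
    ∑ k ∈ range m, Polynomial.C (((k : ℝ) + 1) * u (k + 1)) * U ℝ k =
      derivative (∑ k ∈ range (m + 1), Polynomial.C (u k) * T ℝ k) := by
  induction m with
  | zero => simp
  | succ m ih =>
    rw [sum_range_succ, sum_range_succ (fun k => Polynomial.C (u k) * T ℝ (k : ℤ)) (m + 1),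
      derivative_add, ← ih]
    congr 1
    rw [derivative_mul, derivative_C, zero_mul, zero_add, T_derivative_eq_U]
    have h1 : ((m + 1 : ℕ) : ℤ) - 1 = (m : ℤ) := by push_cast; ring
    have h2 : (((m + 1 : ℕ) : ℤ) : ℝ[X]) = Polynomial.C ((m : ℝ) + 1) := by
      push_cast; simp
    rw [h1, h2, ← mul_assoc, ← Polynomial.C_mul, mul_comm (u (m + 1)) ((m : ℝ) + 1)]

private lemma conv_aux (v : ℕ → ℝ) (M : ℕ) :
    ∑ k ∈ range (M + 1),
        Polynomial.C (if k = 0 then v 0 - v 2 / 2 else (v k - v (k + 2)) / 2) * U ℝ k =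
      ∑ k ∈ range (M + 1), Polynomial.C (v k) * T ℝ k -
        (Polynomial.C (v (M + 1)) * Polynomial.C (2⁻¹ : ℝ) * U ℝ ((M : ℤ) - 1) +
          Polynomial.C (v (M + 2)) * Polynomial.C (2⁻¹ : ℝ) * U ℝ (M : ℤ)) := by
  have h12 : (2 : ℝ[X]) * Polynomial.C (2⁻¹ : ℝ) = 1 := by
    rw [← C_1, ← map_ofNat (Polynomial.C : ℝ →+* ℝ[X]) 2, ← Polynomial.C_mul]
    norm_num
  induction M with
  | zero =>
    have hc : Polynomial.C (v 0 - v 2 / 2) =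
        Polynomial.C (v 0) - Polynomial.C (v 2) * Polynomial.C (2⁻¹ : ℝ) := by
      rw [← Polynomial.C_mul, ← C_sub]; congr 1
    simp [U_neg_one, hc]
  | succ M ih =>
    rw [sum_range_succ, sum_range_succ (fun k => Polynomial.C (v k) * T ℝ (k : ℤ)), ih,
      if_neg (Nat.succ_ne_zero M)]
    have e3 : M + 1 + 2 = M + 3 := rfl
    have hsub : Polynomial.C ((v (M + 1) - v (M + 3)) / 2) =
        (Polynomial.C (v (M + 1)) - Polynomial.C (v (M + 3))) * Polynomial.C (2⁻¹ : ℝ) := by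
      rw [← C_sub, ← Polynomial.C_mul]
      congr 1
    rw [e3, hsub]
    have h2T := two_mul_T_aux ((M : ℤ) + 1)
    have hidx : ((M : ℤ) + 1) - 2 = (M : ℤ) - 1 := by ring
    rw [hidx] at h2T
    push_cast
    have hidx2 : ((M : ℤ) + 1) - 1 = (M : ℤ) := by ring
    rw [hidx2]
    linear_combination (-(Polynomial.C (v (M + 1)) * Polynomial.C (2⁻¹ : ℝ))) * h2T +
      Polynomial.C (v (M + 1)) * T ℝ ((M : ℤ) + 1) * h12

/-- Discretization of `u' + a u`: let `u`, `a` be coefficient sequences vanishing from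
index `N` on, let `v = M_0[a] u` be the Chebyshev product coefficients (characterized by
`∑ v_k T_k = (∑ a_j T_j)(∑ u_k T_k)`, with `v` also vanishing from `N` on), and let
`D_0 u` and `S_0 v` be given by `(D_0 u)_k = (k+1) u_{k+1}`, `(S_0 v)_0 = v_0 - v_2/2`,
`(S_0 v)_k = (v_k - v_{k+2})/2` for `k ≥ 1`.  Then the Chebyshev-U series with
coefficients `D_0 u + S_0 M_0[a] u` equals the polynomial `u'(x) + a(x) u(x)`. -/
theorem first_order_operator_coefficients (N : ℕ) (u a v : ℕ → ℝ)
    (hu : ∀ k, N ≤ k → u k = 0) (ha : ∀ k, N ≤ k → a k = 0) (hv : ∀ k, 2 * N ≤ k → v k = 0)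
    (hM : ∑ k ∈ range (2 * N), Polynomial.C (v k) * T ℝ k =
        (∑ j ∈ range N, Polynomial.C (a j) * T ℝ j) *
          (∑ k ∈ range N, Polynomial.C (u k) * T ℝ k)) :
    ∑ k ∈ range (2 * N), Polynomial.C
        (((k : ℝ) + 1) * u (k + 1) +
          (if k = 0 then v 0 - v 2 / 2 else (v k - v (k + 2)) / 2)) * U ℝ k =
      derivative (∑ k ∈ range N, Polynomial.C (u k) * T ℝ k) +
        (∑ j ∈ range N, Polynomial.C (a j) * T ℝ j) *
          (∑ k ∈ range N, Polynomial.C (u k) * T ℝ k) := by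
  rcases Nat.eq_zero_or_pos N with hN | hN
  · subst hN; simp
  obtain ⟨M, hMN⟩ : ∃ M, 2 * N = M + 1 := ⟨2 * N - 1, by omega⟩
  have hsplit : ∀ k : ℕ,
      Polynomial.C (((k : ℝ) + 1) * u (k + 1) +
          (if k = 0 then v 0 - v 2 / 2 else (v k - v (k + 2)) / 2)) * U ℝ (k : ℤ) =
        Polynomial.C (((k : ℝ) + 1) * u (k + 1)) * U ℝ (k : ℤ) +
          Polynomial.C (if k = 0 then v 0 - v 2 / 2 else (v k - v (k + 2)) / 2) * U ℝ (k : ℤ) := by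
    intro k; rw [map_add, add_mul]
  rw [Finset.sum_congr rfl fun k _ => hsplit k, Finset.sum_add_distrib]
  have hext : ∑ k ∈ range N, Polynomial.C (u k) * T ℝ (k : ℤ) =
      ∑ k ∈ range (2 * N + 1), Polynomial.C (u k) * T ℝ (k : ℤ) := by
    apply Finset.sum_subset (by intro x hx; simp at *; omega)
    intro x _ hx
    rw [hu x (by simp at hx; omega)]
    simp
  have h1 : ∑ k ∈ range (2 * N), Polynomial.C (((k : ℝ) + 1) * u (k + 1)) * U ℝ (k : ℤ) =
      derivative (∑ k ∈ range N, Polynomial.C (u k) * T ℝ (k : ℤ)) := by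
    rw [hext, deriv_aux]
  have h2 : ∑ k ∈ range (2 * N),
      Polynomial.C (if k = 0 then v 0 - v 2 / 2 else (v k - v (k + 2)) / 2) * U ℝ (k : ℤ) =
      (∑ j ∈ range N, Polynomial.C (a j) * T ℝ (j : ℤ)) *
        ∑ k ∈ range N, Polynomial.C (u k) * T ℝ (k : ℤ) := by
    rw [hMN, conv_aux, hv (M + 1) (by omega), hv (M + 2) (by omega), ← hMN, hM]
    simp
  rw [h1, h2]
end
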